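/- In the setting of the abstract convergence theorem, assume additionally the small step-size safeguard (A3): ‖x_{n+1} − x_n‖ ≥ κ g⁻(x_n) for some κ > 0 and all large n. Then g⁻(x_n) → 0, and the convergence rate satisfies ‖x_n − x*‖ ≤ C e^{−cn} for some c, C > 0 if θ = 1/2, and ‖x_n − x*‖ ≤ C n^{−θ/(1−2θ)} if 0 < θ < 1/2. -/

import Mathlib

open scoped RealInnerProductSpace

/-- Sequential tangent cone of `M ⊆ ℝ^N` at `x`. -/
def seqTangentCone {N : ℕ} (M : Set (EuclideanSpace ℝ (Fin N)))
    (x : EuclideanSpace ℝ (Fin N)) : Set (EuclideanSpace ℝ (Fin N)) :=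
  {ξ | ∃ (X : ℕ → EuclideanSpace ℝ (Fin N)) (a : ℕ → ℝ),
      (∀ i, X i ∈ M) ∧ (∀ i, 0 < a i) ∧
      Filter.Tendsto X Filter.atTop (nhds x) ∧
      Filter.Tendsto (fun i => a i • (X i - x)) Filter.atTop (nhds ξ)}

/-- `g⁻(y)`: the norm of the projection of the antigradient `−∇f(y)` onto the tangent
cone of `M` at `y`, characterized as `max{ −∇f(y)ᵀξ : ξ ∈ T_y M, ‖ξ‖ ≤ 1 }`. -/
noncomputable def gNeg {N : ℕ} (f : EuclideanSpace ℝ (Fin N) → ℝ)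
    (M : Set (EuclideanSpace ℝ (Fin N))) (y : EuclideanSpace ℝ (Fin N)) : ℝ :=
  sSup ((fun ξ => ⟪-(gradient f y), ξ⟫) '' {ξ | ξ ∈ seqTangentCone M y ∧ ‖ξ‖ ≤ 1})

lemma gNeg_nonneg' {N : ℕ} (f : EuclideanSpace ℝ (Fin N) → ℝ)
    (M : Set (EuclideanSpace ℝ (Fin N))) {y : EuclideanSpace ℝ (Fin N)} (hy : y ∈ M) :
    0 ≤ gNeg f M y := by
  have h0 : (0 : EuclideanSpace ℝ (Fin N)) ∈ seqTangentCone M y := by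
    refine ⟨fun _ => y, fun _ => 1, fun _ => hy, fun _ => one_pos, tendsto_const_nhds, ?_⟩
    simpa using (tendsto_const_nhds :
      Filter.Tendsto (fun _ : ℕ => (0 : EuclideanSpace ℝ (Fin N))) Filter.atTop (nhds 0))
  have hmem : (0 : ℝ) ∈
      ((fun ξ => ⟪-(gradient f y), ξ⟫) '' {ξ | ξ ∈ seqTangentCone M y ∧ ‖ξ‖ ≤ 1}) :=
    ⟨0, ⟨h0, by simp⟩, by simp⟩
  have hbdd : BddAbove
      ((fun ξ => ⟪-(gradient f y), ξ⟫) '' {ξ | ξ ∈ seqTangentCone M y ∧ ‖ξ‖ ≤ 1}) := by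
    refine ⟨‖gradient f y‖, ?_⟩
    rintro z ⟨ξ, ⟨-, hξ⟩, rfl⟩
    calc ⟪-(gradient f y), ξ⟫ ≤ ‖-(gradient f y)‖ * ‖ξ‖ := real_inner_le_norm _ _
    _ ≤ ‖gradient f y‖ * 1 := by
        rw [norm_neg]; exact mul_le_mul_of_nonneg_left hξ (norm_nonneg _)
    _ = ‖gradient f y‖ := mul_one _
  exact le_csSup hbdd hmem

lemma conv_rpow' {γ a b : ℝ} (hγ : 0 < γ) (hb : 0 < b) (hba : b ≤ a) :
    a ^ (-γ) + γ * a ^ (-(1 + γ)) * (a - b) ≤ b ^ (-γ) := by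
  have ha : 0 < a := hb.trans_le hba
  have hu0 : 0 < b / a := div_pos hb ha
  have hu1 : b / a ≤ 1 := (div_le_one ha).2 hba
  have key : 1 + γ * (1 - b / a) ≤ (b / a) ^ (-γ) := by
    have hinv : (b / a) ^ (-γ) = ((b / a) ^ γ)⁻¹ := by
      rw [Real.rpow_neg hu0.le]
    rcases le_or_gt 1 γ with hγ1 | hγ1
    · have hs : -1 ≤ a / b - 1 := by
        have : 0 < a / b := div_pos ha hb
        linarith
      have hber := one_add_mul_self_le_rpow_one_add hs hγ1
      rw [add_sub_cancel] at hber
      have hab : (a / b) ^ γ = ((b / a) ^ γ)⁻¹ := by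
        rw [show a / b = (b / a)⁻¹ by rw [inv_div], Real.inv_rpow hu0.le]
      have hamgm : 1 - b / a ≤ a / b - 1 := by
        rw [div_sub_one hb.ne', sub_div' (c := a) ha.ne']
        rw [div_le_div_iff₀ ha hb]
        nlinarith
      calc 1 + γ * (1 - b / a) ≤ 1 + γ * (a / b - 1) := by nlinarith
        _ ≤ (a / b) ^ γ := hber
        _ = (b / a) ^ (-γ) := by rw [hab, hinv]
    · have hs : -1 ≤ b / a - 1 := by linarith
      have hber := rpow_one_add_le_one_add_mul_self hs hγ.le hγ1.le
      rw [add_sub_cancel] at hber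
      set t := γ * (1 - b / a) with ht
      have ht0 : 0 ≤ t := by
        have : 0 ≤ 1 - b / a := by linarith
        positivity
      have hber' : (b / a) ^ γ ≤ 1 - t := by rw [ht]; linarith
      have hpos : 0 < (b / a) ^ γ := Real.rpow_pos_of_pos hu0 _
      have h1t : 0 < 1 - t := lt_of_lt_of_le hpos hber'
      have h2 : (1 - t)⁻¹ ≤ ((b / a) ^ γ)⁻¹ := inv_anti₀ hpos hber'
      have h3 : 1 + t ≤ (1 - t)⁻¹ := by
        rw [inv_eq_one_div, le_div_iff₀ h1t]
        nlinarith
      rw [hinv]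
      linarith
  have haγ : 0 < a ^ (-γ) := Real.rpow_pos_of_pos ha _
  have hmul := mul_le_mul_of_nonneg_left key haγ.le
  have e1 : a ^ (-γ) * (b / a) ^ (-γ) = b ^ (-γ) := by
    rw [Real.div_rpow hb.le ha.le]
    field_simp
  have e2 : a ^ (-(1 + γ)) = a ^ (-γ) / a := by
    rw [show -(1 + γ) = -γ + -1 by ring, Real.rpow_add ha, Real.rpow_neg_one]
    ring
  have e3 : a ^ (-γ) * (1 + γ * (1 - b / a)) = a ^ (-γ) + γ * (a ^ (-γ) / a) * (a - b) := by
    field_simp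
  rw [e2]
  rw [e1] at hmul
  linarith [e3 ▸ hmul]

lemma conc_rpow' {θ a b : ℝ} (hθ0 : 0 < θ) (hθ1 : θ ≤ 1) (ha : 0 < a) (hb : 0 ≤ b)
    (hba : b ≤ a) : θ * a ^ (θ - 1) * (a - b) ≤ a ^ θ - b ^ θ := by
  have hid : a ^ (θ - 1) = a ^ θ / a := by rw [Real.rpow_sub ha, Real.rpow_one]
  have haθ : 0 < a ^ θ := Real.rpow_pos_of_pos ha _
  rcases eq_or_lt_of_le hb with rfl | hb
  · rw [Real.zero_rpow hθ0.ne', hid, sub_zero, sub_zero]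
    have e1 : θ * (a ^ θ / a) * a = θ * a ^ θ := by field_simp
    rw [e1]
    nlinarith
  · have hs : -1 ≤ b / a - 1 := by
      have : 0 < b / a := div_pos hb ha
      linarith
    have hber := rpow_one_add_le_one_add_mul_self hs hθ0.le hθ1
    rw [add_sub_cancel] at hber
    have hba' : (b / a) ^ θ = b ^ θ / a ^ θ := Real.div_rpow hb.le ha.le θ
    have key : b ^ θ / a ^ θ ≤ 1 + θ * (b / a - 1) := hba' ▸ hber
    have key2 : b ^ θ ≤ a ^ θ * (1 + θ * (b / a - 1)) := by
      rw [← div_le_iff₀' haθ]; exact key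
    have e2 : a ^ θ * (1 + θ * (b / a - 1)) = a ^ θ + θ * a ^ θ * (b / a) - θ * a ^ θ := by
      ring
    have e1 : θ * (a ^ θ / a) * (a - b) = θ * a ^ θ - θ * a ^ θ * (b / a) := by
      field_simp
    rw [hid, e1]
    linarith [e2 ▸ key2]

set_option maxHeartbeats 2000000 in
/-- Under (A1), (A2), the Łojasiewicz inequality at the cluster point `x*`
and additionally the small step-size safeguard (A3) for large `n`, one has
`g⁻(x_n) → 0` and the convergence rate `‖x_n − x*‖ ≤ C e^{−cn}` if `θ = 1/2`,
resp. `‖x_n − x*‖ ≤ C n^{−θ/(1−2θ)}` if `0 < θ < 1/2`. -/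
theorem stmt_15 {N : ℕ} (f : EuclideanSpace ℝ (Fin N) → ℝ)
    (hf : ContDiff ℝ 1 f) (hbdd : ∃ b : ℝ, ∀ y, b ≤ f y)
    (M : Set (EuclideanSpace ℝ (Fin N))) (hM : IsClosed M)
    (x : ℕ → EuclideanSpace ℝ (Fin N)) (hxM : ∀ i, x i ∈ M)
    (σ : ℝ) (hσ : 0 < σ)
    (hA1 : ∀ i, f (x (i+1)) - f (x i) ≤ -σ * gNeg f M (x i) * ‖x (i+1) - x i‖)
    (hA2 : ∀ i, gNeg f M (x i) = 0 → x (i+1) = x i)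
    (κ : ℝ) (hκ : 0 < κ)
    (hA3 : ∃ n₁ : ℕ, ∀ i ≥ n₁, κ * gNeg f M (x i) ≤ ‖x (i+1) - x i‖)
    (xstar : EuclideanSpace ℝ (Fin N))
    (hcluster : MapClusterPt xstar Filter.atTop x)
    (δ Λ θ : ℝ) (hδ : 0 < δ) (hΛ : 0 < Λ) (hθ : θ ∈ Set.Ioc (0 : ℝ) (1/2))
    (hLoj : ∀ y ∈ M, ‖y - xstar‖ < δ →
      |f y - f xstar| ^ (1 - θ) ≤ Λ * gNeg f M y) :
    Filter.Tendsto (fun i => gNeg f M (x i)) Filter.atTop (nhds 0) ∧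
    (θ = 1/2 → ∃ c C : ℝ, 0 < c ∧ 0 < C ∧
      ∀ i : ℕ, ‖x i - xstar‖ ≤ C * Real.exp (-(c * i))) ∧
    (θ < 1/2 → ∃ C : ℝ, 0 < C ∧
      ∀ i : ℕ, 1 ≤ i → ‖x i - xstar‖ ≤ C * (i : ℝ) ^ (-(θ / (1 - 2*θ)))) := by
  classical
  obtain ⟨b, hb⟩ := hbdd
  obtain ⟨θpos, θle⟩ := hθ
  obtain ⟨n₁, hn₁⟩ := hA3
  set g : ℕ → ℝ := fun i => gNeg f M (x i) with hgdef
  have hg0 : ∀ i, 0 ≤ g i := fun i => gNeg_nonneg' f M (hxM i)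
  set F : ℕ → ℝ := fun i => f (x i) with hFdef
  have hstep0 : ∀ i, σ * g i * ‖x (i+1) - x i‖ ≤ F i - F (i+1) := by
    intro i
    have h := hA1 i
    simp only [hFdef, hgdef]
    linarith
  have hdec : ∀ i, F (i+1) ≤ F i := by
    intro i
    have h := hstep0 i
    nlinarith [mul_nonneg (mul_nonneg hσ.le (hg0 i)) (norm_nonneg (x (i+1) - x i))]
  have hAnti : Antitone F := antitone_nat_of_succ_le hdec
  have hBdd : BddBelow (Set.range F) := ⟨b, by rintro _ ⟨i, rfl⟩; exact hb _⟩
  set L : ℝ := ⨅ i, F i with hLdef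
  have hFL : Filter.Tendsto F Filter.atTop (nhds L) := tendsto_atTop_ciInf hAnti hBdd
  have hLF : ∀ i, L ≤ F i := fun i => ciInf_le hBdd i
  have hfx : f xstar = L := by
    have h1 : MapClusterPt (f xstar) Filter.atTop (f ∘ x) :=
      hcluster.continuousAt_comp hf.continuous.continuousAt
    have h3 : ClusterPt (f xstar) (Filter.map (f ∘ x) Filter.atTop) := h1.clusterPt
    have h4 : Filter.map (f ∘ x) Filter.atTop ≤ nhds L := hFL
    exact eq_of_nhds_neBot (h3.mono h4)
  have hΔ0 : ∀ i, 0 ≤ F i - L := fun i => sub_nonneg.2 (hLF i)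
  have hΔanti : ∀ i, F (i+1) - L ≤ F i - L := fun i => by linarith [hdec i]
  have hΔantile : ∀ i j, i ≤ j → F j - L ≤ F i - L := fun i j h => by
    have := hAnti h; linarith
  have hΔto0 : Filter.Tendsto (fun n => F n - L) Filter.atTop (nhds 0) := by
    simpa using hFL.sub_const L
  -- frequently close to xstar
  have hfreq : ∀ ε : ℝ, 0 < ε → ∃ᶠ n in Filter.atTop, ‖x n - xstar‖ < ε := by
    intro ε hε
    have h := mapClusterPt_iff_frequently.1 hcluster (Metric.ball xstar ε) (Metric.ball_mem_nhds _ hε)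
    exact h.mono fun n hn => by rwa [Metric.mem_ball, dist_eq_norm] at hn
  -- Part 1 : g → 0
  have hgto0 : Filter.Tendsto (fun i => gNeg f M (x i)) Filter.atTop (nhds 0) := by
    have hdiff0 : Filter.Tendsto (fun i => F i - F (i+1)) Filter.atTop (nhds 0) := by
      have h2 : Filter.Tendsto (fun i => F (i+1)) Filter.atTop (nhds L) :=
        hFL.comp (Filter.tendsto_add_atTop_nat 1)
      simpa using hFL.sub h2
    have hsq : Filter.Tendsto (fun i => g i ^ 2) Filter.atTop (nhds 0) := by
      refine squeeze_zero' (g := fun i => 1 / (σ * κ) * (F i - F (i+1))) (Filter.Eventually.of_forall fun i => sq_nonneg _) ?_ ?_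
      · filter_upwards [Filter.eventually_ge_atTop n₁] with i hi
        have key : σ * κ * g i ^ 2 ≤ F i - F (i+1) := by
          have h1 := hstep0 i
          have h2 := hn₁ i hi
          nlinarith [mul_le_mul_of_nonneg_left h2 (mul_nonneg hσ.le (hg0 i))]
        calc g i ^ 2 = 1 / (σ * κ) * (σ * κ * g i ^ 2) := by field_simp
          _ ≤ 1 / (σ * κ) * (F i - F (i+1)) :=
              mul_le_mul_of_nonneg_left key (by positivity)
      · simpa using hdiff0.const_mul (1 / (σ * κ))
    have h := (Real.continuous_sqrt.tendsto 0).comp hsq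
    rw [Real.sqrt_zero] at h
    refine h.congr fun i => ?_
    simp only [Function.comp_apply]
    rw [Real.sqrt_sq (hg0 i)]
  refine ⟨hgto0, ?_⟩
  -- constants
  set K : ℝ := Λ / (σ * θ) with hKdef
  have hK : 0 < K := by positivity
  have hKid : K * (σ * θ) = Λ := by rw [hKdef]; field_simp
  -- step estimate
  have claim_step : ∀ i, ‖x i - xstar‖ < δ →
      ‖x (i+1) - x i‖ ≤ K * ((F i - L) ^ θ - (F (i+1) - L) ^ θ) := by
    intro i hiball
    rcases eq_or_lt_of_le (hΔ0 i) with h0 | hΔpos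
    · -- F i = L
      have h01 : F (i+1) - L = 0 := le_antisymm (by linarith [hΔanti i]) (hΔ0 (i+1))
      rw [← h0, h01]
      have hs0 := hstep0 i
      have : g i * ‖x (i+1) - x i‖ ≤ 0 := by nlinarith [hs0, h0, h01]
      have hprod : g i * ‖x (i+1) - x i‖ = 0 :=
        le_antisymm this (mul_nonneg (hg0 i) (norm_nonneg _))
      rcases mul_eq_zero.1 hprod with hgz | hsz
      · have := hA2 i hgz
        simp [this]
      · simp [hsz]
    · -- F i > L
      have hLoj' : (F i - L) ^ (1 - θ) ≤ Λ * g i := by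
        have h := hLoj (x i) (hxM i) hiball
        rw [hfx, abs_of_nonneg (hΔ0 i)] at h
        exact h
      have ht : 0 < (F i - L) ^ (1 - θ) := Real.rpow_pos_of_pos hΔpos _
      have hgpos : 0 < g i := by nlinarith
      have hP : 0 < (F i - L) ^ (θ - 1) := Real.rpow_pos_of_pos hΔpos _
      have hconc := conc_rpow' θpos (by linarith) hΔpos (hΔ0 (i+1)) (hΔanti i)
      have h1 : 1 ≤ Λ * g i * (F i - L) ^ (θ - 1) := by
        have hmul : (F i - L) ^ (1 - θ) * (F i - L) ^ (θ - 1) = 1 := by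
          rw [← Real.rpow_add hΔpos]
          norm_num
        calc (1 : ℝ) = (F i - L) ^ (1 - θ) * (F i - L) ^ (θ - 1) := hmul.symm
          _ ≤ Λ * g i * (F i - L) ^ (θ - 1) :=
              mul_le_mul_of_nonneg_right hLoj' hP.le
      set s := ‖x (i+1) - x i‖ with hsdef
      have hs0 : 0 ≤ s := norm_nonneg _
      have hD := hstep0 i
      have c1 : θ * (F i - L) ^ (θ - 1) * (σ * g i * s) ≤
          θ * (F i - L) ^ (θ - 1) * ((F i - L) - (F (i+1) - L)) := by
        refine mul_le_mul_of_nonneg_left ?_ (by positivity)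
        linarith
      have c2 := hconc
      have c3 : K * (θ * (F i - L) ^ (θ - 1) * (σ * g i * s)) ≤
          K * ((F i - L) ^ θ - (F (i+1) - L) ^ θ) := by
        refine mul_le_mul_of_nonneg_left ?_ hK.le
        linarith
      have c4 : K * (θ * (F i - L) ^ (θ - 1) * (σ * g i * s)) =
          Λ * g i * (F i - L) ^ (θ - 1) * s := by
        have : K * (θ * (F i - L) ^ (θ - 1) * (σ * g i * s)) =
            (K * (σ * θ)) * (g i * (F i - L) ^ (θ - 1) * s) := by ring
        rw [this, hKid]
        ring
      have c5 : s ≤ Λ * g i * (F i - L) ^ (θ - 1) * s :=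
        le_mul_of_one_le_left hs0 h1
      calc s ≤ Λ * g i * (F i - L) ^ (θ - 1) * s := c5
        _ = K * (θ * (F i - L) ^ (θ - 1) * (σ * g i * s)) := c4.symm
        _ ≤ K * ((F i - L) ^ θ - (F (i+1) - L) ^ θ) := c3
  -- choose n₀
  have hKΔθ : Filter.Tendsto (fun n => K * (F n - L) ^ θ) Filter.atTop (nhds 0) := by
    have h := hΔto0.rpow_const (p := θ) (Or.inr θpos.le)
    rw [Real.zero_rpow θpos.ne'] at h
    simpa using h.const_mul K
  have hev : ∀ᶠ n in Filter.atTop, K * (F n - L) ^ θ < δ / 2 ∧ n₁ ≤ n :=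
    (hKΔθ.eventually_lt_const (by linarith : (0:ℝ) < δ/2)).and (Filter.eventually_ge_atTop n₁)
  obtain ⟨n₀, hn₀ball, hn₀K, hn₀n₁⟩ :
      ∃ n₀, ‖x n₀ - xstar‖ < δ / 2 ∧ K * (F n₀ - L) ^ θ < δ / 2 ∧ n₁ ≤ n₀ := by
    obtain ⟨n₀, h1, h2, h3⟩ := ((hfreq (δ/2) (by linarith)).and_eventually hev).exists
    exact ⟨n₀, h1, h2, h3⟩
  -- capture
  have cap : ∀ n, n₀ ≤ n →
      ‖x n - xstar‖ ≤ ‖x n₀ - xstar‖ + K * ((F n₀ - L) ^ θ - (F n - L) ^ θ) := by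
    intro n hn
    induction n, hn using Nat.le_induction with
    | base => simp
    | succ n hn ih =>
      have hnball : ‖x n - xstar‖ < δ := by
        have h1 : 0 ≤ K * (F n - L) ^ θ :=
          mul_nonneg hK.le (Real.rpow_nonneg (hΔ0 n) _)
        nlinarith
      have hs := claim_step n hnball
      have htri : ‖x (n+1) - xstar‖ ≤ ‖x (n+1) - x n‖ + ‖x n - xstar‖ := by
        have := dist_triangle (x (n+1)) (x n) xstar
        simpa [dist_eq_norm] using this
      calc ‖x (n+1) - xstar‖ ≤ ‖x (n+1) - x n‖ + ‖x n - xstar‖ := htri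
        _ ≤ K * ((F n - L) ^ θ - (F (n+1) - L) ^ θ) +
            (‖x n₀ - xstar‖ + K * ((F n₀ - L) ^ θ - (F n - L) ^ θ)) := by linarith
        _ = ‖x n₀ - xstar‖ + K * ((F n₀ - L) ^ θ - (F (n+1) - L) ^ θ) := by ring
  have hball : ∀ n, n₀ ≤ n → ‖x n - xstar‖ < δ := by
    intro n hn
    have h1 := cap n hn
    have h2 : 0 ≤ K * (F n - L) ^ θ := mul_nonneg hK.le (Real.rpow_nonneg (hΔ0 n) _)
    nlinarith
  -- tail length bound
  have tail : ∀ n, n₀ ≤ n → ∀ m, n ≤ m →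
      ‖x m - x n‖ ≤ K * ((F n - L) ^ θ - (F m - L) ^ θ) := by
    intro n hn m hm
    induction m, hm using Nat.le_induction with
    | base => simp
    | succ m hm ih =>
      have hs := claim_step m (hball m (hn.trans hm))
      have htri : ‖x (m+1) - x n‖ ≤ ‖x (m+1) - x m‖ + ‖x m - x n‖ := by
        have := dist_triangle (x (m+1)) (x m) (x n)
        simpa [dist_eq_norm] using this
      calc ‖x (m+1) - x n‖ ≤ ‖x (m+1) - x m‖ + ‖x m - x n‖ := htri
        _ ≤ K * ((F m - L) ^ θ - (F (m+1) - L) ^ θ) +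
            K * ((F n - L) ^ θ - (F m - L) ^ θ) := by linarith
        _ = K * ((F n - L) ^ θ - (F (m+1) - L) ^ θ) := by ring
  -- key distance estimate
  have hKey : ∀ n, n₀ ≤ n → ‖x n - xstar‖ ≤ K * (F n - L) ^ θ := by
    intro n hn
    refine le_of_forall_pos_le_add fun ε hε => ?_
    obtain ⟨m, hm1, hm2⟩ := ((hfreq ε hε).and_eventually (Filter.eventually_ge_atTop n)).exists
    have h1 := tail n hn m hm2
    have htri : ‖x n - xstar‖ ≤ ‖x m - x n‖ + ‖x m - xstar‖ := by
      have := dist_triangle (x n) (x m) xstar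
      rw [dist_comm (x n) (x m)] at this
      simpa [dist_eq_norm] using this
    have h2 : 0 ≤ K * (F m - L) ^ θ := mul_nonneg hK.le (Real.rpow_nonneg (hΔ0 m) _)
    nlinarith
  -- recursion constant
  set c₀ : ℝ := σ * κ / Λ ^ 2 with hc₀def
  have hc₀ : 0 < c₀ := by positivity
  have hrec : ∀ n, n₀ ≤ n →
      c₀ * ((F n - L) ^ (1 - θ) * (F n - L) ^ (1 - θ)) ≤ (F n - L) - (F (n+1) - L) := by
    intro n hn
    have hLoj' : (F n - L) ^ (1 - θ) ≤ Λ * g n := by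
      have h := hLoj (x n) (hxM n) (hball n hn)
      rw [hfx, abs_of_nonneg (hΔ0 n)] at h
      exact h
    have ht0 : 0 ≤ (F n - L) ^ (1 - θ) := Real.rpow_nonneg (hΔ0 n) _
    have h2 : σ * κ * (g n * g n) ≤ (F n - L) - (F (n+1) - L) := by
      have ha := hstep0 n
      have hb' := hn₁ n (hn₀n₁.trans hn)
      nlinarith [mul_le_mul_of_nonneg_left hb' (mul_nonneg hσ.le (hg0 n))]
    have h3 : (F n - L) ^ (1 - θ) * (F n - L) ^ (1 - θ) ≤ (Λ * g n) * (Λ * g n) :=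
      mul_le_mul hLoj' hLoj' ht0 (mul_nonneg hΛ.le (hg0 n))
    calc c₀ * ((F n - L) ^ (1 - θ) * (F n - L) ^ (1 - θ))
        ≤ c₀ * ((Λ * g n) * (Λ * g n)) := mul_le_mul_of_nonneg_left h3 hc₀.le
      _ = σ * κ * (g n * g n) := by rw [hc₀def, div_mul_eq_mul_div, div_eq_iff (pow_pos hΛ 2).ne']; ring
      _ ≤ (F n - L) - (F (n+1) - L) := h2
  constructor
  · -- θ = 1/2 : linear rate
    intro hθhalf
    have hlin : ∀ n, n₀ ≤ n → c₀ * (F n - L) ≤ (F n - L) - (F (n+1) - L) := by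
      intro n hn
      have h := hrec n hn
      have e : (F n - L) ^ (1 - θ) * (F n - L) ^ (1 - θ) = F n - L := by
        rw [← Real.rpow_add' (hΔ0 n) (by rw [hθhalf]; norm_num),
          show (1 - θ) + (1 - θ) = 1 by rw [hθhalf]; ring, Real.rpow_one]
      rwa [e] at h
    set q : ℝ := max (1 - c₀) (1/2) with hqdef
    have hq0 : 0 < q := lt_of_lt_of_le one_half_pos (le_max_right _ _)
    have hq1 : q < 1 := max_lt (by linarith) (by norm_num)
    have hgeo : ∀ n, n₀ ≤ n → F (n+1) - L ≤ q * (F n - L) := by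
      intro n hn
      have h := hlin n hn
      have h2 : (1 - c₀) * (F n - L) ≤ q * (F n - L) :=
        mul_le_mul_of_nonneg_right (le_max_left _ _) (hΔ0 n)
      nlinarith
    have hΔgeo : ∀ n, n₀ ≤ n → F n - L ≤ (F n₀ - L) * q ^ (n - n₀) := by
      intro n hn
      induction n, hn using Nat.le_induction with
      | base => simp
      | succ n hn ih =>
        have h := hgeo n hn
        have e : q * ((F n₀ - L) * q ^ (n - n₀)) = (F n₀ - L) * q ^ (n + 1 - n₀) := by
          rw [Nat.succ_sub hn, pow_succ]
          ring
        calc F (n+1) - L ≤ q * (F n - L) := h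
          _ ≤ q * ((F n₀ - L) * q ^ (n - n₀)) := mul_le_mul_of_nonneg_left ih hq0.le
          _ = (F n₀ - L) * q ^ (n + 1 - n₀) := e
    set c : ℝ := -Real.log q / 2 with hcdef
    have hlogq : Real.log q < 0 := Real.log_neg hq0 hq1
    have hc : 0 < c := by rw [hcdef]; linarith
    set C₁ : ℝ := K * (F n₀ - L) ^ θ * Real.exp (c * n₀) with hC₁def
    have hC₁0 : 0 ≤ C₁ :=
      mul_nonneg (mul_nonneg hK.le (Real.rpow_nonneg (hΔ0 n₀) _)) (Real.exp_pos _).le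
    have hmain : ∀ n, n₀ ≤ n → ‖x n - xstar‖ ≤ C₁ * Real.exp (-(c * n)) := by
      intro n hn
      have h1 := hKey n hn
      have h2 : (F n - L) ^ θ ≤ ((F n₀ - L) * q ^ (n - n₀)) ^ θ :=
        Real.rpow_le_rpow (hΔ0 n) (hΔgeo n hn) θpos.le
      have h3 : ((F n₀ - L) * q ^ (n - n₀)) ^ θ =
          (F n₀ - L) ^ θ * ((q ^ (n - n₀) : ℝ)) ^ θ :=
        Real.mul_rpow (hΔ0 n₀) (by positivity)
      have h4 : ((q ^ (n - n₀) : ℝ)) ^ θ =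
          Real.exp (((n - n₀ : ℕ) : ℝ) * Real.log q * θ) := by
        rw [Real.rpow_def_of_pos (pow_pos hq0 _), Real.log_pow]
      have hcast : ((n - n₀ : ℕ) : ℝ) = (n : ℝ) - n₀ := by
        rw [Nat.cast_sub hn]
      have h5 : ((n - n₀ : ℕ) : ℝ) * Real.log q * θ = -(c * n) + c * n₀ := by
        rw [hcast, hθhalf, hcdef]
        ring
      calc ‖x n - xstar‖ ≤ K * (F n - L) ^ θ := h1
        _ ≤ K * ((F n₀ - L) ^ θ * ((q ^ (n - n₀) : ℝ)) ^ θ) := by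
            refine mul_le_mul_of_nonneg_left ?_ hK.le
            rw [← h3]
            exact h2
        _ = K * (F n₀ - L) ^ θ * Real.exp (-(c * n) + c * n₀) := by
            rw [h4, h5]
            ring
        _ = C₁ * Real.exp (-(c * n)) := by
            rw [hC₁def, Real.exp_add]
            ring
    set C : ℝ := C₁ + (∑ i ∈ Finset.range n₀, ‖x i - xstar‖ * Real.exp (c * i)) + 1
      with hCdef
    have hsum0 : 0 ≤ ∑ i ∈ Finset.range n₀, ‖x i - xstar‖ * Real.exp (c * i) :=
      Finset.sum_nonneg fun i _ => mul_nonneg (norm_nonneg _) (Real.exp_pos _).le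
    refine ⟨c, C, hc, by rw [hCdef]; linarith, ?_⟩
    intro i
    rcases le_or_gt n₀ i with hi | hi
    · calc ‖x i - xstar‖ ≤ C₁ * Real.exp (-(c * i)) := hmain i hi
        _ ≤ C * Real.exp (-(c * i)) := by
            refine mul_le_mul_of_nonneg_right ?_ (Real.exp_pos _).le
            rw [hCdef]
            linarith
    · have ht := Finset.single_le_sum
        (f := fun j => ‖x j - xstar‖ * Real.exp (c * j))
        (fun j _ => mul_nonneg (norm_nonneg _) (Real.exp_pos _).le)
        (Finset.mem_range.2 hi)
      have ht2 : ‖x i - xstar‖ * Real.exp (c * i) ≤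
          ∑ j ∈ Finset.range n₀, ‖x j - xstar‖ * Real.exp (c * j) := ht
      have h2 : ‖x i - xstar‖ * Real.exp (c * i) ≤ C := by
        rw [hCdef]
        linarith
      rw [Real.exp_neg, ← div_eq_mul_inv, le_div_iff₀ (Real.exp_pos _)]
      exact h2
  · -- θ < 1/2 : polynomial rate
    intro hθlt
    have hγ0 : (0:ℝ) < 1 - 2*θ := by linarith
    set γ : ℝ := 1 - 2*θ with hγdef
    set μ : ℝ := γ * c₀ with hμdef
    have hμ : 0 < μ := mul_pos hγ0 hc₀
    have hInd : ∀ n, n₀ ≤ n → (F n - L = 0) ∨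
        μ * ((n:ℝ) - (n₀:ℝ)) + (F n₀ - L) ^ (-γ) ≤ (F n - L) ^ (-γ) := by
      intro n hn
      induction n, hn using Nat.le_induction with
      | base => right; simp
      | succ n hn ih =>
        by_cases hz : F (n+1) - L = 0
        · exact Or.inl hz
        · right
          have hpos1 : 0 < F (n+1) - L := lt_of_le_of_ne (hΔ0 _) (Ne.symm hz)
          have hposn : 0 < F n - L := lt_of_lt_of_le hpos1 (hΔanti n)
          have hprev : μ * ((n:ℝ) - (n₀:ℝ)) + (F n₀ - L) ^ (-γ) ≤ (F n - L) ^ (-γ) := by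
            rcases ih with h | h
            · exact absurd h (ne_of_gt hposn)
            · exact h
          have hconv := conv_rpow' hγ0 hpos1 (hΔanti n)
          have hrecn := hrec n hn
          have hpown : (F n - L) ^ (1 - θ) * (F n - L) ^ (1 - θ) =
              (F n - L) ^ (1 + γ) := by
            rw [← Real.rpow_add hposn]
            congr 1
            rw [hγdef]
            ring
          rw [hpown] at hrecn
          have hcancel : (F n - L) ^ (-(1+γ)) * (F n - L) ^ (1+γ) = 1 := by
            rw [← Real.rpow_add hposn, show -(1+γ) + (1+γ) = 0 by ring, Real.rpow_zero]
          have hPpos : (0:ℝ) < (F n - L) ^ (-(1+γ)) := Real.rpow_pos_of_pos hposn _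
          have h6 : μ ≤ γ * (F n - L) ^ (-(1+γ)) * ((F n - L) - (F (n+1) - L)) := by
        
            have hm := mul_le_mul_of_nonneg_left hrecn
              (by positivity : (0:ℝ) ≤ γ * (F n - L) ^ (-(1+γ)))
            have e : γ * (F n - L) ^ (-(1+γ)) * (c₀ * (F n - L) ^ (1+γ)) = μ := by
              calc γ * (F n - L) ^ (-(1+γ)) * (c₀ * (F n - L) ^ (1+γ))
                  = γ * c₀ * ((F n - L) ^ (-(1+γ)) * (F n - L) ^ (1+γ)) := by ring
                _ = γ * c₀ * 1 := by rw [hcancel]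
                _ = μ := by rw [hμdef, mul_one]
            exact le_trans (le_of_eq e.symm) hm
          have h7 : (F n - L) ^ (-γ) + μ ≤ (F (n+1) - L) ^ (-γ) := by
            linarith
          push_cast
          nlinarith [hprev, h7]
    set β : ℝ := θ / γ with hβdef
    have hβ : 0 < β := div_pos θpos hγ0
    set C₂ : ℝ := K * (μ/2) ^ (-β) with hC₂def
    have hC₂0 : 0 ≤ C₂ := mul_nonneg hK.le (Real.rpow_nonneg (by positivity) _)
    have hmain : ∀ n : ℕ, 2*n₀+2 ≤ n → ‖x n - xstar‖ ≤ C₂ * (n:ℝ) ^ (-β) := by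
      intro n hn
      have hn₀n : n₀ ≤ n := by omega
      have h1 := hKey n hn₀n
      have hRHS0 : 0 ≤ C₂ * (n:ℝ) ^ (-β) :=
        mul_nonneg hC₂0 (Real.rpow_nonneg (Nat.cast_nonneg n) _)
      rcases eq_or_lt_of_le (hΔ0 n) with hz | hpos
      · rw [← hz, Real.zero_rpow θpos.ne', mul_zero] at h1
        linarith
      · have hbound : μ * ((n:ℝ) - (n₀:ℝ)) + (F n₀ - L) ^ (-γ) ≤ (F n - L) ^ (-γ) := by
          rcases hInd n hn₀n with h | h
          · exact absurd h (ne_of_gt hpos)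
          · exact h
        have hhalf : (n:ℝ)/2 ≤ (n:ℝ) - (n₀:ℝ) := by
          have hcast := (Nat.cast_le (α := ℝ)).2 hn
          push_cast at hcast
          linarith
        have hnpos : (0:ℝ) < (n:ℝ)/2 := by
          have : (2:ℕ) ≤ n := by omega
          have := (Nat.cast_le (α := ℝ)).2 this
          push_cast at this
          linarith
        have h0' : (0:ℝ) ≤ (F n₀ - L) ^ (-γ) := Real.rpow_nonneg (hΔ0 n₀) _
        have h2 : μ * ((n:ℝ)/2) ≤ (F n - L) ^ (-γ) := by
          nlinarith [mul_le_mul_of_nonneg_left hhalf hμ.le]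
        have h3 : (F n - L) ^ θ = ((F n - L) ^ (-γ)) ^ (-β) := by
          rw [← Real.rpow_mul (hΔ0 n)]
          congr 1
          rw [hβdef]
          field_simp
        have h4 : ((F n - L) ^ (-γ)) ^ (-β) ≤ (μ * ((n:ℝ)/2)) ^ (-β) :=
          Real.rpow_le_rpow_of_nonpos (by positivity) h2 (by linarith)
        have h5 : (μ * ((n:ℝ)/2)) ^ (-β) = (μ/2) ^ (-β) * (n:ℝ) ^ (-β) := by
          rw [show μ * ((n:ℝ)/2) = (μ/2) * n by ring,
            Real.mul_rpow (by positivity) (Nat.cast_nonneg n)]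
        calc ‖x n - xstar‖ ≤ K * (F n - L) ^ θ := h1
          _ ≤ K * ((μ/2) ^ (-β) * (n:ℝ) ^ (-β)) := by
              refine mul_le_mul_of_nonneg_left ?_ hK.le
              rw [h3, ← h5]
              exact h4
          _ = C₂ * (n:ℝ) ^ (-β) := by
              rw [hC₂def]
              ring
    set C : ℝ := C₂ + (∑ i ∈ Finset.range (2*n₀+2), ‖x i - xstar‖ * (i:ℝ) ^ β) + 1
      with hCdef
    have hsum0 : 0 ≤ ∑ i ∈ Finset.range (2*n₀+2), ‖x i - xstar‖ * (i:ℝ) ^ β :=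
      Finset.sum_nonneg fun i _ =>
        mul_nonneg (norm_nonneg _) (Real.rpow_nonneg (Nat.cast_nonneg i) _)
    refine ⟨C, by rw [hCdef]; linarith, ?_⟩
    intro i hi1
    have hipos : (0:ℝ) < (i:ℝ) := by exact_mod_cast hi1
    rcases le_or_gt (2*n₀+2) i with hi | hi
    · calc ‖x i - xstar‖ ≤ C₂ * (i:ℝ) ^ (-β) := hmain i hi
        _ ≤ C * (i:ℝ) ^ (-β) := by
            refine mul_le_mul_of_nonneg_right ?_ (Real.rpow_nonneg (Nat.cast_nonneg i) _)
            rw [hCdef]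
            linarith
    · have ht := Finset.single_le_sum
        (f := fun j => ‖x j - xstar‖ * (j:ℝ) ^ β)
        (fun j _ => mul_nonneg (norm_nonneg _) (Real.rpow_nonneg (Nat.cast_nonneg j) _))
        (Finset.mem_range.2 hi)
      have ht2 : ‖x i - xstar‖ * (i:ℝ) ^ β ≤
          ∑ j ∈ Finset.range (2*n₀+2), ‖x j - xstar‖ * (j:ℝ) ^ β := ht
      have h2 : ‖x i - xstar‖ * (i:ℝ) ^ β ≤ C := by
        rw [hCdef]
        linarith
      have hpow : (0:ℝ) < (i:ℝ) ^ β := Real.rpow_pos_of_pos hipos _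
      rw [Real.rpow_neg (Nat.cast_nonneg i), ← div_eq_mul_inv, le_div_iff₀ hpow]
      exact h2
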